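/- Let α ∈ R⁺, β ∈ Δ(α), and β' ∈ N⁺(α,β). Then n_β(α) < 2 n_{β'}(α). -/

import Mathlib

/- Setting: a reduced, irreducible, crystallographic, simply laced root system `roots`
in a real inner product space `V`, with a fixed base `base` of simple roots,
its Weyl group (generated by the reflections in the simple roots), the length
function, the (strong) Bruhat order, the weak left Bruhat order, the sets
`A_ℓ(v)`, `A(v)`, `D(w)`, `AD(v,w)`, and the partial order on roots induced
by the base. -/

open scoped InnerProductSpace Classical

noncomputable section

variable {V : Type*} [NormedAddCommGroup V] [InnerProductSpace ℝ V]

/-- The underlying linear map of the reflection `s_α : x ↦ x - (2⟪x,α⟫/⟪α,α⟫) α`. -/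
def reflMap (α : V) : V →ₗ[ℝ] V where
  toFun x := x - (2 * ⟪x, α⟫_ℝ / ⟪α, α⟫_ℝ) • α
  map_add' x y := by
    simp only [inner_add_left]
    rw [show 2 * (⟪x, α⟫_ℝ + ⟪y, α⟫_ℝ) / ⟪α, α⟫_ℝ
        = 2 * ⟪x, α⟫_ℝ / ⟪α, α⟫_ℝ + 2 * ⟪y, α⟫_ℝ / ⟪α, α⟫_ℝ by ring]
    rw [add_smul]
    abel
  map_smul' c x := by
    simp only [real_inner_smul_left, RingHom.id_apply, smul_sub, smul_smul]
    rw [show 2 * (c * ⟪x, α⟫_ℝ) / ⟪α, α⟫_ℝ = c * (2 * ⟪x, α⟫_ℝ / ⟪α, α⟫_ℝ) by ring]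

theorem reflMap_involutive (α : V) : Function.Involutive (reflMap α) := by
  intro x
  by_cases h : (⟪α, α⟫_ℝ) = (0 : ℝ)
  · have hα : α = 0 := inner_self_eq_zero.mp h
    simp [reflMap, hα]
  · show reflMap α (x - (2 * ⟪x, α⟫_ℝ / ⟪α, α⟫_ℝ) • α) = x
    show (x - (2 * ⟪x, α⟫_ℝ / ⟪α, α⟫_ℝ) • α)
        - (2 * ⟪x - (2 * ⟪x, α⟫_ℝ / ⟪α, α⟫_ℝ) • α, α⟫_ℝ / ⟪α, α⟫_ℝ) • α = x
    have h1 : ⟪x - (2 * ⟪x, α⟫_ℝ / ⟪α, α⟫_ℝ) • α, α⟫_ℝ = -⟪x, α⟫_ℝ := by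
      rw [inner_sub_left, real_inner_smul_left]
      field_simp
      ring
    rw [h1, show 2 * -⟪x, α⟫_ℝ / ⟪α, α⟫_ℝ = -(2 * ⟪x, α⟫_ℝ / ⟪α, α⟫_ℝ) by ring,
      neg_smul, sub_neg_eq_add, sub_add_cancel]

/-- The reflection `s_α` in the hyperplane orthogonal to `α`,
as a linear automorphism of `V`. -/
def sRefl (α : V) : V ≃ₗ[ℝ] V := LinearEquiv.ofInvolutive (reflMap α) (reflMap_involutive α)

/-- A reduced, irreducible, crystallographic, simply laced root system in the real
inner product space `V`, together with a choice of base (system of simple roots)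
and the corresponding coordinate function `coeff α β = n_β(α)`. -/
structure SimplyLacedRootSystem (V : Type*) [NormedAddCommGroup V]
    [InnerProductSpace ℝ V] : Type _ where
  /-- the set `R` of roots -/
  roots : Set V
  /-- the base `Δ` of simple roots -/
  base : Finset V
  finite : roots.Finite
  nonzero : ∀ α ∈ roots, α ≠ 0
  span_eq_top : Submodule.span ℝ roots = ⊤
  /-- the root system is reduced -/
  reduced : ∀ α ∈ roots, ∀ t : ℝ, t • α ∈ roots → t = 1 ∨ t = -1
  /-- the root system is crystallographic: all `⟨γ,α⟩ = 2(γ,α)/(α,α)` are integers -/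
  crystallographic : ∀ α ∈ roots, ∀ γ ∈ roots, ∃ n : ℤ, 2 * ⟪γ, α⟫_ℝ / ⟪α, α⟫_ℝ = (n : ℝ)
  reflect_mem : ∀ α ∈ roots, ∀ γ ∈ roots, sRefl α γ ∈ roots
  /-- the root system is simply laced: all roots have the same length -/
  simplyLaced : ∀ α ∈ roots, ∀ γ ∈ roots, ⟪α, α⟫_ℝ = ⟪γ, γ⟫_ℝ
  /-- the root system is irreducible -/
  irreducible : ∀ R₁ R₂ : Set V, R₁ ∪ R₂ = roots →
    (∀ α ∈ R₁, ∀ γ ∈ R₂, ⟪α, γ⟫_ℝ = 0) → R₁ = ∅ ∨ R₂ = ∅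
  base_subset : ↑base ⊆ roots
  base_indep : LinearIndependent ℝ (Subtype.val : {x : V // x ∈ base} → V)
  /-- `coeff α β` is the coefficient `n_β(α)` of the simple root `β` in `α` -/
  coeff : V → V → ℝ
  coeff_spec : ∀ α ∈ roots, α = ∑ β ∈ base, coeff α β • β
  coeff_int : ∀ α ∈ roots, ∀ β ∈ base, ∃ n : ℤ, coeff α β = (n : ℝ)
  coeff_sign : ∀ α ∈ roots, (∀ β ∈ base, 0 ≤ coeff α β) ∨ (∀ β ∈ base, coeff α β ≤ 0)

namespace SimplyLacedRootSystem

variable (P : SimplyLacedRootSystem V)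

/-- The set `R⁺` of positive roots. -/
def pos : Set V := {α ∈ P.roots | ∀ β ∈ P.base, 0 ≤ P.coeff α β}

/-- The support `Δ(α) = {β ∈ Δ : n_β(α) > 0}` of a (positive) root `α`. -/
def support (α : V) : Finset V := P.base.filter (fun β => 0 < P.coeff α β)

/-- `N⁺(α,β) = {β' ∈ Δ(α) : (β,β') < 0 and (α,β') > 0}`. -/
def Nplus (α β : V) : Finset V :=
  (P.support α).filter (fun β' => ⟪β, β'⟫_ℝ < 0 ∧ 0 < ⟪α, β'⟫_ℝ)

/-- `N⁻(α,β) = {β' ∈ Δ(α) : (β,β') < 0 and (α,β') ≤ 0}`. -/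
def Nminus (α β : V) : Finset V :=
  (P.support α).filter (fun β' => ⟪β, β'⟫_ℝ < 0 ∧ ⟪α, β'⟫_ℝ ≤ 0)

/-- The partial order on `V` induced by the base: `x ≤ y` iff `y - x` is a
nonnegative linear combination of the simple roots. -/
def rle (x y : V) : Prop :=
  ∃ c : V → ℝ, (∀ β, 0 ≤ c β) ∧ y - x = ∑ β ∈ P.base, c β • β

/-- The strict version of the partial order `rle` on roots. -/
def rlt (x y : V) : Prop := P.rle x y ∧ x ≠ y

/-- `α` is a minimal element of the set `S` with respect to the partial order on roots. -/
def IsMinimalIn (α : V) (S : Set V) : Prop := α ∈ S ∧ ∀ γ ∈ S, ¬ P.rlt γ α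

/-- The Weyl group `W`, i.e. the subgroup of `GL(V)` generated by the reflections
in the simple roots (equivalently, by all the reflections `s_α`, `α ∈ R`). -/
def weyl : Subgroup (V ≃ₗ[ℝ] V) := Subgroup.closure (sRefl '' ↑P.base)

/-- The length function `ℓ` of `W` with respect to the simple reflections. -/
def len (w : V ≃ₗ[ℝ] V) : ℕ :=
  sInf {n | ∃ l : List V, l.length = n ∧ (∀ β ∈ l, β ∈ P.base) ∧ (l.map sRefl).prod = w}

/-- One step in the Bruhat order: multiplication by the reflection of a positive
root which increases the length. -/
def bStep (u w : V ≃ₗ[ℝ] V) : Prop :=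
  ∃ α ∈ P.pos, w = sRefl α * u ∧ P.len u < P.len w

/-- The (strong) Bruhat order `≤` on `W`. -/
def ble : (V ≃ₗ[ℝ] V) → (V ≃ₗ[ℝ] V) → Prop := Relation.ReflTransGen P.bStep

/-- The strict (strong) Bruhat order `<` on `W`. -/
def blt (u w : V ≃ₗ[ℝ] V) : Prop := P.ble u w ∧ u ≠ w

/-- The covering relation `⋖` of the Bruhat order. -/
def bcov (u w : V ≃ₗ[ℝ] V) : Prop := P.blt u w ∧ P.len w = P.len u + 1

/-- One step in the weak left Bruhat order. -/
def wlStep (u w : V ≃ₗ[ℝ] V) : Prop :=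
  ∃ β ∈ P.base, w = sRefl β * u ∧ P.len u < P.len w

/-- The weak left Bruhat order `≤_ℓ` on `W`. -/
def wle : (V ≃ₗ[ℝ] V) → (V ≃ₗ[ℝ] V) → Prop := Relation.ReflTransGen P.wlStep

/-- `A_ℓ(v) = {β ∈ Δ : v < s_β v}`. -/
def Al (v : V ≃ₗ[ℝ] V) : Set V := {β : V | β ∈ P.base ∧ P.blt v (sRefl β * v)}

/-- `A(v) = {α ∈ R⁺ : v⁻¹(α) > 0}`. -/
def A (v : V ≃ₗ[ℝ] V) : Set V := {α ∈ P.pos | v⁻¹ α ∈ P.pos}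

/-- `D(w) = {α ∈ R⁺ : w⁻¹(α) < 0}`. -/
def Dset (w : V ≃ₗ[ℝ] V) : Set V := {α ∈ P.pos | -(w⁻¹ α) ∈ P.pos}

/-- `AD(v,w) = A(v) ∩ D(w)`. -/
def ADset (v w : V ≃ₗ[ℝ] V) : Set V := P.A v ∩ P.Dset w

end SimplyLacedRootSystem


namespace SimplyLacedRootSystem

/-- Coefficients of a vanishing combination of simple roots vanish. -/
lemma coeff_zero_of_sum_zero (P : SimplyLacedRootSystem V) {c : V → ℝ}
    (h : ∑ δ ∈ P.base, c δ • δ = 0) : ∀ δ ∈ P.base, c δ = 0 := by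
  have hli := P.base_indep
  rw [Fintype.linearIndependent_iff] at hli
  intro δ hδ
  have h' : ∑ i : {x : V // x ∈ P.base}, c i.val • i.val = 0 := by
    rw [Finset.sum_coe_sort P.base (fun δ => c δ • δ)]; exact h
  exact hli (fun i => c i.val) h' ⟨δ, hδ⟩

/-- Distinct simple roots have nonpositive inner product. -/
lemma inner_base_nonpos (P : SimplyLacedRootSystem V) {γ β' : V}
    (hγ : γ ∈ P.base) (hb : β' ∈ P.base) (hne : γ ≠ β') : ⟪γ, β'⟫_ℝ ≤ 0 := by
  by_contra hpos
  push_neg at hpos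
  have hγr : γ ∈ P.roots := P.base_subset hγ
  have hbr : β' ∈ P.roots := P.base_subset hb
  have hc : (0 : ℝ) < ⟪β', β'⟫_ℝ :=
    lt_of_le_of_ne real_inner_self_nonneg
      (Ne.symm (inner_self_ne_zero.mpr (P.nonzero β' hbr)))
  obtain ⟨n, hn⟩ := P.crystallographic β' hbr γ hγr
  have hn' : 2 * ⟪γ, β'⟫_ℝ = n * ⟪β', β'⟫_ℝ := by
    field_simp at hn; linarith [hn]
  have hnpos : (0 : ℝ) < (n : ℝ) := by
    rcases lt_trichotomy ((n : ℝ)) 0 with h1 | h1 | h1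
    · nlinarith
    · nlinarith
    · exact h1
  have hn1 : (1 : ℤ) ≤ n := by exact_mod_cast Int.cast_pos.mp hnpos
  rcases eq_or_lt_of_le hn1 with heq | hlt
  · -- n = 1 : γ - β' is a root, contradicting sign of coefficients
    have hval : 2 * ⟪γ, β'⟫_ℝ = ⟪β', β'⟫_ℝ := by
      rw [hn']; rw [← heq]; push_cast; ring
    have hrefl : (sRefl β') γ = γ - β' := by
      have h0 : (sRefl β') γ = γ - (2 * ⟪γ, β'⟫_ℝ / ⟪β', β'⟫_ℝ) • β' := rfl
      rw [h0, show 2 * ⟪γ, β'⟫_ℝ / ⟪β', β'⟫_ℝ = 1 by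
        rw [hval]; field_simp, one_smul]
    have hroot : γ - β' ∈ P.roots := by
      have := P.reflect_mem β' hbr γ hγr
      rwa [hrefl] at this
    -- coefficients of γ - β'
    set μ := γ - β' with hμ
    have hspec := P.coeff_spec μ hroot
    set d : V → ℝ := fun δ =>
      P.coeff μ δ - (if δ = γ then 1 else 0) + (if δ = β' then 1 else 0) with hd
    have hdsum : ∑ δ ∈ P.base, d δ • δ = 0 := by
      have e1 : ∑ δ ∈ P.base, (if δ = γ then (1:ℝ) else 0) • δ = γ := by
        simp only [ite_smul, one_smul, zero_smul, Finset.sum_ite_eq' P.base γ, if_pos hγ]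
      have e2 : ∑ δ ∈ P.base, (if δ = β' then (1:ℝ) else 0) • δ = β' := by
        simp only [ite_smul, one_smul, zero_smul, Finset.sum_ite_eq' P.base β', if_pos hb]
      simp only [hd, sub_smul, add_smul, Finset.sum_add_distrib,
        Finset.sum_sub_distrib, e1, e2, ← hspec]
      rw [hμ]
      abel
    have hdz := P.coeff_zero_of_sum_zero hdsum
    have h1 := hdz γ hγ
    have h2 := hdz β' hb
    simp only [hd, if_pos, if_neg hne, if_neg (Ne.symm hne)] at h1 h2
    have hcγ : P.coeff μ γ = 1 := by
      have : P.coeff μ γ - 1 + 0 = 0 := by simpa using h1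
      linarith
    have hcβ' : P.coeff μ β' = -1 := by
      have : P.coeff μ β' - 0 + 1 = 0 := by simpa using h2
      linarith
    rcases P.coeff_sign μ hroot with hs | hs
    · have := hs β' hb; rw [hcβ'] at this; linarith
    · have := hs γ hγ; rw [hcγ] at this; linarith
  · -- n ≥ 2 : then γ = β', contradiction
    have h2n : (2 : ℝ) ≤ (n : ℝ) := by exact_mod_cast hlt
    have hγγ : ⟪γ, γ⟫_ℝ = ⟪β', β'⟫_ℝ := P.simplyLaced γ hγr β' hbr
    have hsub : ⟪γ - β', γ - β'⟫_ℝ ≤ 0 := by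
      have hexp : ⟪γ - β', γ - β'⟫_ℝ
          = ⟪γ, γ⟫_ℝ - 2 * ⟪γ, β'⟫_ℝ + ⟪β', β'⟫_ℝ := by
        rw [inner_sub_left, inner_sub_right, inner_sub_right, real_inner_comm γ β']; ring
      rw [hexp, hγγ, hn']
      nlinarith
    have hz : γ - β' = 0 := by
      have h0 : ⟪γ - β', γ - β'⟫_ℝ = 0 := le_antisymm hsub real_inner_self_nonneg
      exact inner_self_eq_zero.mp h0
    exact hne (sub_eq_zero.mp hz)

end SimplyLacedRootSystem

/-- Let α ∈ R⁺, β ∈ Δ(α), and β' ∈ N⁺(α,β). Then n_β(α) < 2 n_{β'}(α). -/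
theorem stmt9 (P : SimplyLacedRootSystem V) (α : V) (hα : α ∈ P.pos)
    (β : V) (hβ : β ∈ P.support α) (β' : V) (hβ' : β' ∈ P.Nplus α β) :
    P.coeff α β < 2 * P.coeff α β' := by
  classical
  -- unpack hypotheses
  have hβm : β ∈ P.base ∧ 0 < P.coeff α β := Finset.mem_filter.mp hβ
  have hβ'm := Finset.mem_filter.mp hβ'
  have hβ's : β' ∈ P.base ∧ 0 < P.coeff α β' := Finset.mem_filter.mp hβ'm.1
  obtain ⟨hββ'neg, hαβ'pos⟩ := hβ'm.2
  have hβb : β ∈ P.base := hβm.1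
  have hβ'b : β' ∈ P.base := hβ's.1
  have hβ'r : β' ∈ P.roots := P.base_subset hβ'b
  have hc : (0 : ℝ) < ⟪β', β'⟫_ℝ :=
    lt_of_le_of_ne real_inner_self_nonneg
      (Ne.symm (inner_self_ne_zero.mpr (P.nonzero β' hβ'r)))
  have hne : β ≠ β' := by
    intro h; rw [h] at hββ'neg; linarith
  -- (β, β') ≤ -(β',β')/2
  obtain ⟨n, hn⟩ := P.crystallographic β' hβ'r β (P.base_subset hβb)
  have hn' : 2 * ⟪β, β'⟫_ℝ = n * ⟪β', β'⟫_ℝ := by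
    field_simp at hn; linarith [hn]
  have hnneg : (n : ℝ) ≤ -1 := by
    have h0 : (n : ℝ) < 0 := by nlinarith
    have : n < 0 := by exact_mod_cast h0
    exact_mod_cast Int.le_sub_one_of_lt this |>.trans (by simp)
  have hββ'le : ⟪β, β'⟫_ℝ ≤ -(⟪β', β'⟫_ℝ) / 2 := by nlinarith
  -- expansion of ⟪α, β'⟫
  set t : V → ℝ := fun γ => P.coeff α γ * ⟪γ, β'⟫_ℝ with ht
  have hexp : ⟪α, β'⟫_ℝ = ∑ γ ∈ P.base, t γ := by
    conv_lhs => rw [P.coeff_spec α hα.1]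
    rw [sum_inner]
    exact Finset.sum_congr rfl (fun γ _ => real_inner_smul_left _ _ _)
  have hβe : β ∈ P.base.erase β' := Finset.mem_erase.mpr ⟨hne, hβb⟩
  have hsplit : ∑ γ ∈ P.base, t γ
      = t β' + (t β + ∑ γ ∈ (P.base.erase β').erase β, t γ) := by
    rw [← Finset.add_sum_erase _ t hβ'b, ← Finset.add_sum_erase _ t hβe]
  have hrem : ∑ γ ∈ (P.base.erase β').erase β, t γ ≤ 0 := by
    apply Finset.sum_nonpos
    intro γ hγ
    have hγ1 : γ ∈ P.base.erase β' := Finset.mem_of_mem_erase hγ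
    have hγb : γ ∈ P.base := Finset.mem_of_mem_erase hγ1
    have hγne : γ ≠ β' := (Finset.mem_erase.mp hγ1).1
    exact mul_nonpos_of_nonneg_of_nonpos (hα.2 γ hγb)
      (P.inner_base_nonpos hγb hβ'b hγne)
  have h1 : 0 < t β' + t β := by
    have := hexp ▸ hαβ'pos
    rw [hsplit] at this
    linarith
  have htβ' : t β' = P.coeff α β' * ⟪β', β'⟫_ℝ := rfl
  have htβ : t β ≤ -(P.coeff α β * ⟪β', β'⟫_ℝ) / 2 := by
    have := mul_le_mul_of_nonneg_left hββ'le (le_of_lt hβm.2)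
    exact this.trans_eq (by ring)
  nlinarith [hβm.2, hβ's.2]
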